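/- Let r ≥ 2, n₁ = r^{l₁}, n₂ = r^{l₂}. Let G₁ = ⟨a, t₁,…,t_k ∣ t₁⁻¹ a t₁ = a^{n₁^{m₁}}, t_i⁻¹ a^{n₁^{p_{i−1}}} t_i = a^{n₁^{p_{i−1}}} (2 ≤ i ≤ k)⟩ and G₂ = ⟨b, s₁,…,s_k ∣ s₁⁻¹ b s₁ = b^{n₂^{m₂}}, s_i⁻¹ b^{n₂^{q_{i−1}}} s_i = b^{n₂^{q_{i−1}}} (2 ≤ i ≤ k)⟩ with 0 ≤ p_i ≤ m₁−1 and 0 ≤ q_i ≤ m₂−1. If l₁ m₁ = l₂ m₂ = S and there exist C ∈ Z and a permutation σ of {1,…,k−1} with l₂ q_{σ(i)} ≡ l₁ p_i + C (mod S) for all i, then G₁ ≅ G₂. -/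

import Mathlib

section GBSAux

variable {G : Type*} [Group G]

/-- conjugation of a zpow by g -/
lemma gbs_conj_zpow (g x : G) (y : ℤ) : (g * x * g⁻¹) ^ y = g * x ^ y * g⁻¹ := conj_zpow

/-- single step: move a power of `a` past `t`. -/
lemma gbs_step {a t : G} {n : ℤ} (h : t⁻¹ * a * t = a ^ n) (x : ℤ) :
    t⁻¹ * a ^ x * t = a ^ (x * n) := by
  have : (t⁻¹ * a * t⁻¹⁻¹) ^ x = t⁻¹ * a ^ x * t⁻¹⁻¹ := conj_zpow
  rw [inv_inv] at this
  rw [← this, h, ← zpow_mul, mul_comm]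

lemma gbs_up {a t : G} {n : ℤ} (h : t⁻¹ * a * t = a ^ n) (u : ℕ) (x : ℤ) :
    a ^ x * t ^ u = t ^ u * a ^ (x * n ^ u) := by
  induction u generalizing x with
  | zero => simp
  | succ u ih =>
    have h1 : a ^ x * t = t * a ^ (x * n) := by
      rw [← gbs_step h x]; group
    calc a ^ x * t ^ (u + 1) = (a ^ x * t) * t ^ u := by rw [pow_succ']; group
      _ = t * (a ^ (x * n) * t ^ u) := by rw [h1]; group
      _ = t * (t ^ u * a ^ (x * n * n ^ u)) := by rw [ih]
      _ = t ^ (u + 1) * a ^ (x * n ^ (u + 1)) := by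
          rw [pow_succ', pow_succ]; group

lemma gbs_conj_nat {a t : G} {n : ℤ} (h : t⁻¹ * a * t = a ^ n) (u : ℕ) (x : ℤ) :
    (t ^ u)⁻¹ * a ^ x * t ^ u = a ^ (x * n ^ u) := by
  rw [mul_assoc, gbs_up h u x]; group

/-- The main conjugation formula with an integer exponent on `t`. -/
lemma gbs_conj2 {a t : G} {r' : ℤ} {S' : ℕ} (h : t⁻¹ * a * t = a ^ (r' ^ S'))
    (e : ℤ) (E F : ℕ) (hEF : (E : ℤ) = F + S' * e) :
    t ^ (-e) * a ^ (r' ^ F) * t ^ e = a ^ (r' ^ E) := by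
  rcases Int.eq_nat_or_neg e with ⟨u, rfl | rfl⟩
  · have hE : E = F + S' * u := by omega
    have := gbs_conj_nat h u (r' ^ F)
    rw [← zpow_natCast t u] at this
    rw [← zpow_neg] at this
    rw [this, hE]
    congr 1
    rw [pow_add, pow_mul]
  · have hF : F = E + S' * u := by
      have h' : (F:ℤ) = (E:ℤ) + ((S'*u : ℕ) : ℤ) := by push_cast; rw [hEF]; ring
      omega
    have := gbs_conj_nat h u (r' ^ E)
    rw [← zpow_natCast t u, ← zpow_neg] at this
    rw [neg_neg]
    have hexp : (r' : ℤ) ^ F = r' ^ E * (r' ^ S') ^ u := by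
      rw [hF, pow_add, pow_mul]
    rw [hexp, ← this]
    group

/-- Key lemma: conjugates of commuting generators commute with suitably conjugated powers. -/
lemma gbs_key {a t w : G} {r' : ℤ} {S' : ℕ} (h : t⁻¹ * a * t = a ^ (r' ^ S'))
    (e c : ℤ) (E F : ℕ) (hEF : (E : ℤ) = F + S' * (e - c))
    (hc : Commute w (a ^ (r' ^ E))) :
    Commute (t ^ e * w * t ^ (-e)) (t ^ c * a ^ (r' ^ F) * t ^ (-c)) := by
  have h2 := gbs_conj2 h (e - c) E F hEF
  have h3 : t ^ c * a ^ (r' ^ F) * t ^ (-c) = t ^ e * a ^ (r' ^ E) * t ^ (-e) := by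
    rw [← h2]
    have : t ^ e = t ^ c * t ^ (e - c) := by rw [← zpow_add]; ring_nf
    rw [this]
    have : t ^ (-e) = t ^ (-(e-c)) * t ^ (-c) := by rw [← zpow_add]; ring_nf
    rw [this]
    group
  rw [h3]
  have hmap := hc.map (MulAut.conj (t ^ e)).toMonoidHom
  simp only [MulEquiv.coe_toMonoidHom, MulAut.conj_apply] at hmap
  simpa only [zpow_neg] using hmap

lemma gbs_comm_of_rel {w z : G} (h : w⁻¹ * z * w = z) : Commute w z := by
  have h2 : w * (w⁻¹ * z * w) = w * z := by rw [h]
  have h3 : w * z = z * w := by rw [← h2]; group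
  exact h3

lemma gbs_rel_of_comm {w z : G} (h : Commute w z) : w⁻¹ * z * w * z⁻¹ = 1 := by
  have h1 : w * z = z * w := h
  calc w⁻¹ * z * w * z⁻¹ = w⁻¹ * (z * w) * z⁻¹ := by group
    _ = w⁻¹ * (w * z) * z⁻¹ := by rw [h1]
    _ = 1 := by group

end GBSAux

def GBSRels (k : ℕ) (A B : Fin k → ℤ) : Set (FreeGroup (Option (Fin k))) :=
  ⋃ i : Fin k,
    {(FreeGroup.of (some i))⁻¹ * FreeGroup.of none ^ (A i) * FreeGroup.of (some i) *
      (FreeGroup.of none ^ (B i))⁻¹}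

abbrev GBSBouquet (k : ℕ) (A B : Fin k → ℤ) : Type := PresentedGroup (GBSRels k A B)

/-- The defining relations hold in a GBS bouquet group. -/
lemma gbs_presented_rel {k : ℕ} (A B : Fin k → ℤ) (i : Fin k) :
    (PresentedGroup.of (some i) : GBSBouquet k A B)⁻¹ *
      (PresentedGroup.of (none : Option (Fin k))) ^ (A i) * PresentedGroup.of (some i) =
      (PresentedGroup.of (none : Option (Fin k))) ^ (B i) := by
  have hmem : ((FreeGroup.of (some i))⁻¹ * FreeGroup.of (none : Option (Fin k)) ^ (A i) *
      FreeGroup.of (some i) * (FreeGroup.of (none : Option (Fin k)) ^ (B i))⁻¹)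
      ∈ GBSRels k A B := by
    rw [GBSRels, Set.mem_iUnion]
    exact ⟨i, rfl⟩
  have h1 : (PresentedGroup.mk (GBSRels k A B)) ((FreeGroup.of (some i))⁻¹ *
      FreeGroup.of (none : Option (Fin k)) ^ (A i) * FreeGroup.of (some i) *
      (FreeGroup.of (none : Option (Fin k)) ^ (B i))⁻¹) = 1 :=
    (QuotientGroup.eq_one_iff _).2 (Subgroup.subset_normalClosure hmem)
  simp only [map_mul, map_inv, map_zpow] at h1
  exact mul_inv_eq_one.mp h1



theorem GBS_bouquet_iso_of_cyclic_permutation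
    (r l₁ l₂ m₁ m₂ k S : ℕ) [NeZero k]
    (hr : 2 ≤ r) (hl₁ : 1 ≤ l₁) (hl₂ : 1 ≤ l₂) (hm₁ : 1 ≤ m₁) (hm₂ : 1 ≤ m₂)
    (hk : 2 ≤ k) (hS₁ : l₁ * m₁ = S) (hS₂ : l₂ * m₂ = S)
    (A₁ B₁ A₂ B₂ : Fin k → ℤ) (p q : Fin k → ℕ)
    (hp : ∀ i : Fin k, i ≠ 0 → p i ≤ m₁ - 1)
    (hq : ∀ i : Fin k, i ≠ 0 → q i ≤ m₂ - 1)
    (hA₁0 : A₁ 0 = 1) (hB₁0 : B₁ 0 = (r : ℤ) ^ (l₁ * m₁))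
    (hA₁ : ∀ i : Fin k, i ≠ 0 →
      A₁ i = (r : ℤ) ^ (l₁ * p i) ∧ B₁ i = (r : ℤ) ^ (l₁ * p i))
    (hA₂0 : A₂ 0 = 1) (hB₂0 : B₂ 0 = (r : ℤ) ^ (l₂ * m₂))
    (hA₂ : ∀ i : Fin k, i ≠ 0 →
      A₂ i = (r : ℤ) ^ (l₂ * q i) ∧ B₂ i = (r : ℤ) ^ (l₂ * q i))
    (hperm : ∃ (C : ℤ) (σ : Equiv.Perm (Fin k)), σ 0 = 0 ∧
      ∀ i : Fin k, i ≠ 0 →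
        ((l₂ * q (σ i) : ℤ) ≡ (l₁ * p i : ℤ) + C [ZMOD (S : ℤ)])) :
    Nonempty (GBSBouquet k A₁ B₁ ≃* GBSBouquet k A₂ B₂) := by
  classical
  obtain ⟨C, σ, hσ0, hmod⟩ := hperm
  have hS : 0 < S := by
    have h1 : 1 * 1 ≤ l₁ * m₁ := Nat.mul_le_mul hl₁ hm₁
    omega
  have hSne : (S : ℤ) ≠ 0 := by exact_mod_cast hS.ne'
  set C₀ : ℕ := (C % (S : ℤ)).toNat with hC₀def
  have hC₀ : (C₀ : ℤ) = C % (S : ℤ) := Int.toNat_of_nonneg (Int.emod_nonneg C hSne)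
  have hCdvd : (S : ℤ) ∣ C - C₀ := by
    rw [hC₀]
    exact ⟨C / S, by have := Int.mul_ediv_add_emod C (S : ℤ); linarith⟩
  have hgdvd : ∀ i : Fin k, i ≠ 0 →
      (S : ℤ) ∣ ((l₂ * q (σ i) : ℤ) - (l₁ * p i : ℤ) - C₀) := by
    intro i hi
    have h1 : (S : ℤ) ∣ ((l₁ * p i : ℤ) + C) - (l₂ * q (σ i) : ℤ) := (hmod i hi).dvd
    have h3 := dvd_add (dvd_neg.mpr h1) hCdvd
    convert h3 using 1
    · rfl
    · ring
  set g : Fin k → ℤ := fun i => ((l₂ * q (σ i) : ℤ) - (l₁ * p i : ℤ) - C₀) / S with hgdef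
  have hg : ∀ i : Fin k, i ≠ 0 →
      (S : ℤ) * g i = (l₂ * q (σ i) : ℤ) - (l₁ * p i : ℤ) - C₀ :=
    fun i hi => Int.mul_ediv_cancel' (hgdvd i hi)
  set x' : ℕ := C₀ * (S - 1) with hx'def
  have hx' : (x' : ℤ) + C₀ = S * C₀ := by
    have h5 : x' + C₀ = S * C₀ := by
      have h6 : S - 1 + 1 = S := Nat.succ_pred_eq_of_pos hS
      calc x' + C₀ = C₀ * (S - 1 + 1) := by rw [hx'def]; ring
        _ = S * C₀ := by rw [h6]; ring
    exact_mod_cast congrArg (Nat.cast : ℕ → ℤ) h5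
  -- permutation facts
  have hσne : ∀ i : Fin k, i ≠ 0 → σ i ≠ 0 := by
    intro i hi h
    exact hi (σ.injective (by rw [h, hσ0]))
  have hσsymmne : ∀ j : Fin k, j ≠ 0 → σ.symm j ≠ 0 := by
    intro j hj h
    apply hj
    rw [← σ.apply_symm_apply j, h, hσ0]
  -- generators
  set a₁ : GBSBouquet k A₁ B₁ := PresentedGroup.of none with ha₁
  set t : Fin k → GBSBouquet k A₁ B₁ := fun i => PresentedGroup.of (some i) with ht
  set b₂ : GBSBouquet k A₂ B₂ := PresentedGroup.of none with hb₂
  set s : Fin k → GBSBouquet k A₂ B₂ := fun i => PresentedGroup.of (some i) with hs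
  -- relations
  have hT0 : (t 0)⁻¹ * a₁ * t 0 = a₁ ^ ((r : ℤ) ^ S) := by
    have h1 := gbs_presented_rel A₁ B₁ 0
    rw [hA₁0, hB₁0, hS₁, zpow_one] at h1
    exact h1
  have hTi : ∀ i : Fin k, i ≠ 0 → Commute (t i) (a₁ ^ ((r : ℤ) ^ (l₁ * p i))) := by
    intro i hi
    apply gbs_comm_of_rel
    have h1 := gbs_presented_rel A₁ B₁ i
    rw [(hA₁ i hi).1, (hA₁ i hi).2] at h1
    exact h1
  have hS0 : (s 0)⁻¹ * b₂ * s 0 = b₂ ^ ((r : ℤ) ^ S) := by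
    have h1 := gbs_presented_rel A₂ B₂ 0
    rw [hA₂0, hB₂0, hS₂, zpow_one] at h1
    exact h1
  have hSj : ∀ j : Fin k, j ≠ 0 → Commute (s j) (b₂ ^ ((r : ℤ) ^ (l₂ * q j))) := by
    intro j hj
    apply gbs_comm_of_rel
    have h1 := gbs_presented_rel A₂ B₂ j
    rw [(hA₂ j hj).1, (hA₂ j hj).2] at h1
    exact h1
  -- generator images
  set f : Option (Fin k) → GBSBouquet k A₂ B₂ := fun o =>
    Option.elim o (b₂ ^ ((r : ℤ) ^ C₀))
      (fun i => if i = 0 then s 0 else (s 0) ^ (g i) * s (σ i) * (s 0) ^ (-(g i))) with hfdef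
  set h' : Option (Fin k) → GBSBouquet k A₁ B₁ := fun o =>
    Option.elim o ((t 0) ^ ((C₀ : ℤ)) * a₁ ^ ((r : ℤ) ^ x') * (t 0) ^ (-(C₀ : ℤ)))
      (fun j => if j = 0 then t 0
        else (t 0) ^ (-(g (σ.symm j))) * t (σ.symm j) * (t 0) ^ (g (σ.symm j))) with hh'def
  -- f respects the relations
  have hf : ∀ w ∈ GBSRels k A₁ B₁, FreeGroup.lift f w = 1 := by
    intro w hw
    rw [GBSRels, Set.mem_iUnion] at hw
    obtain ⟨i, hw⟩ := hw
    rw [Set.mem_singleton_iff] at hw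
    subst hw
    simp only [map_mul, map_inv, map_zpow, FreeGroup.lift_apply_of]
    by_cases hi : i = 0
    · subst hi
      simp only [hfdef, Option.elim, if_pos rfl, if_true, eq_self_iff_true]
      rw [hA₁0, hB₁0, hS₁, zpow_one]
      have h6 := gbs_step hS0 ((r : ℤ) ^ C₀)
      rw [← zpow_mul, h6]
      group
    · simp only [hfdef, Option.elim, if_neg hi]
      rw [(hA₁ i hi).1, (hA₁ i hi).2]
      apply gbs_rel_of_comm
      have hEF : ((l₂ * q (σ i) : ℕ) : ℤ) = ((C₀ + l₁ * p i : ℕ) : ℤ) + S * (g i - 0) := by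
        have := hg i hi
        push_cast
        push_cast at this
        linarith
      have hkey := gbs_key hS0 (g i) 0 (l₂ * q (σ i)) (C₀ + l₁ * p i) hEF
        (hSj (σ i) (hσne i hi))
      simp only [zpow_zero, one_mul, neg_zero, mul_one] at hkey
      have hexp : (b₂ ^ ((r : ℤ) ^ C₀)) ^ ((r : ℤ) ^ (l₁ * p i))
          = b₂ ^ ((r : ℤ) ^ (C₀ + l₁ * p i)) := by
        rw [← zpow_mul, ← pow_add]
      rw [hexp]
      exact hkey
  -- h' respects the relations
  have hh : ∀ w ∈ GBSRels k A₂ B₂, FreeGroup.lift h' w = 1 := by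
    intro w hw
    rw [GBSRels, Set.mem_iUnion] at hw
    obtain ⟨j, hw⟩ := hw
    rw [Set.mem_singleton_iff] at hw
    subst hw
    simp only [map_mul, map_inv, map_zpow, FreeGroup.lift_apply_of]
    by_cases hj : j = 0
    · subst hj
      simp only [hh'def, Option.elim, if_pos rfl, if_true, eq_self_iff_true]
      rw [hA₂0, hB₂0, hS₂, zpow_one]
      have hlhs : (t 0)⁻¹ * ((t 0) ^ ((C₀ : ℤ)) * a₁ ^ ((r : ℤ) ^ x') * (t 0) ^ (-(C₀ : ℤ))) * t 0
          = (t 0) ^ ((C₀ : ℤ)) * a₁ ^ ((r : ℤ) ^ x' * (r : ℤ) ^ S) * (t 0) ^ (-(C₀ : ℤ)) := by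
        rw [← gbs_step hT0 ((r : ℤ) ^ x')]
        group
      have hrhs : ((t 0) ^ ((C₀ : ℤ)) * a₁ ^ ((r : ℤ) ^ x') * (t 0) ^ (-(C₀ : ℤ))) ^ ((r : ℤ) ^ S)
          = (t 0) ^ ((C₀ : ℤ)) * a₁ ^ ((r : ℤ) ^ x' * (r : ℤ) ^ S) * (t 0) ^ (-(C₀ : ℤ)) := by
        rw [zpow_neg, gbs_conj_zpow, ← zpow_mul]
      rw [hlhs, hrhs]
      group
    · simp only [hh'def, Option.elim, if_neg hj]
      rw [(hA₂ j hj).1, (hA₂ j hj).2]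
      apply gbs_rel_of_comm
      set i : Fin k := σ.symm j with hidef
      have hij : σ i = j := σ.apply_symm_apply j
      have hine : i ≠ 0 := hσsymmne j hj
      have hexp : ((t 0) ^ ((C₀ : ℤ)) * a₁ ^ ((r : ℤ) ^ x') * (t 0) ^ (-(C₀ : ℤ))) ^ ((r : ℤ) ^ (l₂ * q j))
          = (t 0) ^ ((C₀ : ℤ)) * a₁ ^ ((r : ℤ) ^ (x' + l₂ * q (σ i))) * (t 0) ^ (-(C₀ : ℤ)) := by
        rw [zpow_neg, gbs_conj_zpow, ← zpow_mul, ← pow_add, hij]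
      rw [hexp]
      have hEF : ((l₁ * p i : ℕ) : ℤ) = ((x' + l₂ * q (σ i) : ℕ) : ℤ) + S * (-(g i) - C₀) := by
        have h1 := hg i hine
        push_cast
        push_cast at h1 hx'
        linarith
      have hkey := gbs_key hT0 (-(g i)) ((C₀ : ℤ)) (l₁ * p i) (x' + l₂ * q (σ i)) hEF (hTi i hine)
      simpa only [neg_neg] using hkey
  -- the two homomorphisms
  refine ⟨MonoidHom.toMulEquiv (PresentedGroup.toGroup hf) (PresentedGroup.toGroup hh) ?_ ?_⟩
  · apply PresentedGroup.ext
    intro x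
    simp only [MonoidHom.comp_apply, MonoidHom.id_apply, PresentedGroup.toGroup.of]
    match x with
    | none =>
      simp only [hfdef, Option.elim]
      rw [map_zpow, PresentedGroup.toGroup.of]
      simp only [hh'def, Option.elim]
      have hEF : ((0 : ℕ) : ℤ) = ((x' + C₀ : ℕ) : ℤ) + S * (-(C₀ : ℤ)) := by
        push_cast
        push_cast at hx'
        linarith
      have h2 := gbs_conj2 hT0 (-(C₀ : ℤ)) 0 (x' + C₀) hEF
      simp only [neg_neg] at h2
      calc ((t 0) ^ ((C₀ : ℤ)) * a₁ ^ ((r : ℤ) ^ x') * (t 0) ^ (-(C₀ : ℤ))) ^ ((r : ℤ) ^ C₀)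
          = (t 0) ^ ((C₀ : ℤ)) * a₁ ^ ((r : ℤ) ^ (x' + C₀)) * (t 0) ^ (-(C₀ : ℤ)) := by
            rw [zpow_neg, gbs_conj_zpow, ← zpow_mul, ← pow_add]
        _ = a₁ ^ ((r : ℤ) ^ 0) := h2
        _ = a₁ := by simp
    | some i =>
      by_cases hi : i = 0
      · subst hi
        simp only [hfdef, Option.elim, if_pos rfl, if_true, eq_self_iff_true]
        rw [PresentedGroup.toGroup.of]
        simp only [hh'def, Option.elim, if_pos rfl, if_true, eq_self_iff_true]
        rfl
      · simp only [hfdef, Option.elim, if_neg hi]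
        rw [map_mul, map_mul, map_zpow, map_zpow, PresentedGroup.toGroup.of,
          PresentedGroup.toGroup.of]
        simp only [hh'def, Option.elim, if_pos rfl, if_true, eq_self_iff_true, if_neg (hσne i hi), Equiv.symm_apply_apply]
        group
        rfl
  · apply PresentedGroup.ext
    intro x
    simp only [MonoidHom.comp_apply, MonoidHom.id_apply, PresentedGroup.toGroup.of]
    match x with
    | none =>
      simp only [hh'def, Option.elim]
      rw [map_mul, map_mul, map_zpow, map_zpow, map_zpow, PresentedGroup.toGroup.of,
        PresentedGroup.toGroup.of]
      simp only [hfdef, Option.elim, if_pos rfl, if_true, eq_self_iff_true]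
      have hEF : ((0 : ℕ) : ℤ) = ((C₀ + x' : ℕ) : ℤ) + S * (-(C₀ : ℤ)) := by
        push_cast
        push_cast at hx'
        linarith
      have h2 := gbs_conj2 hS0 (-(C₀ : ℤ)) 0 (C₀ + x') hEF
      simp only [neg_neg] at h2
      calc (s 0) ^ ((C₀ : ℤ)) * (b₂ ^ ((r : ℤ) ^ C₀)) ^ ((r : ℤ) ^ x') * (s 0) ^ (-(C₀ : ℤ))
          = (s 0) ^ ((C₀ : ℤ)) * b₂ ^ ((r : ℤ) ^ (C₀ + x')) * (s 0) ^ (-(C₀ : ℤ)) := by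
            rw [← zpow_mul, ← pow_add]
        _ = b₂ ^ ((r : ℤ) ^ 0) := h2
        _ = b₂ := by simp
    | some j =>
      by_cases hj : j = 0
      · subst hj
        simp only [hh'def, Option.elim, if_pos rfl, if_true, eq_self_iff_true]
        rw [PresentedGroup.toGroup.of]
        simp only [hfdef, Option.elim, if_pos rfl, if_true, eq_self_iff_true]
        rfl
      · simp only [hh'def, Option.elim, if_neg hj]
        rw [map_mul, map_mul, map_zpow, map_zpow, PresentedGroup.toGroup.of,
          PresentedGroup.toGroup.of]
        simp only [hfdef, Option.elim, if_pos rfl, if_true, eq_self_iff_true, if_neg (hσsymmne j hj),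
          Equiv.apply_symm_apply]
        group
        rfl
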